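/- Let f be a slice function on Ω_D ⊂ ℍⁿ such that f maps the slice D_I into ℂ_I^n for some imaginary unit I. Then for every α, β ∈ ℝⁿ with α + iβ ∈ D, the maximum of ‖f(α + Jβ)‖ over all imaginary units J equals max{‖f(α + Iβ)‖, ‖f(α - Iβ)‖}, and the minimum over all imaginary units J equals min{‖f(α + Iβ)‖, ‖f(α - Iβ)‖}. -/

import Mathlib

open Finset

lemma unit_im (J : Quaternion ℝ) (h : J ^ 2 = -1) :
    J.re = 0 ∧ J.imI^2 + J.imJ^2 + J.imK^2 = 1 := by
  rw [pow_two] at h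
  have h1 : J.re * J.re - J.imI * J.imI - J.imJ * J.imJ - J.imK * J.imK = -1 := by
    have := congrArg QuaternionAlgebra.re h; simpa [Quaternion.re_mul, Quaternion.re_one] using this
  have h2 : J.re * J.imI = 0 := by
    have := congrArg QuaternionAlgebra.imI h; simp [Quaternion.imI_mul, Quaternion.imI_one] at this; linarith
  have h3 : J.re * J.imJ = 0 := by
    have := congrArg QuaternionAlgebra.imJ h; simp [Quaternion.imJ_mul, Quaternion.imJ_one] at this; linarith
  have h4 : J.re * J.imK = 0 := by
    have := congrArg QuaternionAlgebra.imK h; simp [Quaternion.imK_mul, Quaternion.imK_one] at this; linarith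
  have h5 : J.re ^ 2 * (J.re ^ 2 + 1) = 0 := by nlinarith [h1, h2, h3, h4]
  have h6 : J.re = 0 := by
    rcases mul_eq_zero.mp h5 with h | h
    · exact pow_eq_zero_iff (by norm_num) |>.mp h
    · nlinarith [sq_nonneg J.re]
  exact ⟨h6, by nlinarith⟩

lemma key (a b c d : ℝ) (I J : Quaternion ℝ) (hIre : I.re = 0) (hJre : J.re = 0)
    (hIn : I.imI^2 + I.imJ^2 + I.imK^2 = 1) (hJn : J.imI^2 + J.imJ^2 + J.imK^2 = 1) :
    Quaternion.normSq ((a : Quaternion ℝ) + (b : Quaternion ℝ) * I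
      + J * ((c : Quaternion ℝ) + (d : Quaternion ℝ) * I))
      = a^2 + b^2 + c^2 + d^2
        + 2*(b*c - a*d)*(I.imI*J.imI + I.imJ*J.imJ + I.imK*J.imK) := by
  simp only [Quaternion.normSq_def', Quaternion.re_add, Quaternion.imI_add, Quaternion.imJ_add,
    Quaternion.imK_add, Quaternion.re_mul, Quaternion.imI_mul, Quaternion.imJ_mul,
    Quaternion.imK_mul, Quaternion.re_coe, Quaternion.imI_coe, Quaternion.imJ_coe,
    Quaternion.imK_coe, hIre, hJre]
  linear_combination (b^2 + d^2) * hIn + (c^2 + d^2*(I.imI^2+I.imJ^2+I.imK^2)) * hJn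

set_option maxHeartbeats 1000000 in
theorem stmt8 (n : ℕ) (D : Set (Fin n → ℂ))
    (hD : ∀ z ∈ D, (fun t => (starRingEnd ℂ) (z t)) ∈ D)
    (F₁ F₂ : (Fin n → ℂ) → (Fin n → Quaternion ℝ))
    (heven : ∀ z ∈ D, F₁ (fun t => (starRingEnd ℂ) (z t)) = F₁ z)
    (hodd : ∀ z ∈ D, F₂ (fun t => (starRingEnd ℂ) (z t)) = -F₂ z)
    (f : Quaternion ℝ → (Fin n → ℂ) → (Fin n → Quaternion ℝ))
    (hf : ∀ (L : Quaternion ℝ) (z : Fin n → ℂ) (t : Fin n),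
      f L z t = F₁ z t + L * F₂ z t)
    (I : Quaternion ℝ) (hI : I ^ 2 = -1)
    (hrange : ∀ z ∈ D, ∀ t,
      (∃ x y : ℝ, F₁ z t = (x : Quaternion ℝ) + (y : Quaternion ℝ) * I) ∧
      (∃ x y : ℝ, F₂ z t = (x : Quaternion ℝ) + (y : Quaternion ℝ) * I))
    (α β : Fin n → ℝ)
    (hz : (fun t => (α t : ℂ) + (β t : ℂ) * Complex.I) ∈ D) :
    IsGreatest
      {r : ℝ | ∃ J : Quaternion ℝ, J ^ 2 = -1 ∧
        r = Real.sqrt (∑ t, ‖f J (fun t => (α t : ℂ) + (β t : ℂ) * Complex.I) t‖ ^ 2)}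
      (max (Real.sqrt (∑ t, ‖f I (fun t => (α t : ℂ) + (β t : ℂ) * Complex.I) t‖ ^ 2))
           (Real.sqrt (∑ t, ‖f (-I) (fun t => (α t : ℂ) + (β t : ℂ) * Complex.I) t‖ ^ 2)))
    ∧
    IsLeast
      {r : ℝ | ∃ J : Quaternion ℝ, J ^ 2 = -1 ∧
        r = Real.sqrt (∑ t, ‖f J (fun t => (α t : ℂ) + (β t : ℂ) * Complex.I) t‖ ^ 2)}
      (min (Real.sqrt (∑ t, ‖f I (fun t => (α t : ℂ) + (β t : ℂ) * Complex.I) t‖ ^ 2))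
           (Real.sqrt (∑ t, ‖f (-I) (fun t => (α t : ℂ) + (β t : ℂ) * Complex.I) t‖ ^ 2))) := by
  set z : Fin n → ℂ := fun t => (α t : ℂ) + (β t : ℂ) * Complex.I with hzdef
  clear_value z
  obtain ⟨hIre, hIn⟩ := unit_im I hI
  have h1 : ∀ t, ∃ x y : ℝ, F₁ z t = (x : Quaternion ℝ) + (y : Quaternion ℝ) * I :=
    fun t => (hrange z hz t).1
  have h2 : ∀ t, ∃ x y : ℝ, F₂ z t = (x : Quaternion ℝ) + (y : Quaternion ℝ) * I :=
    fun t => (hrange z hz t).2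
  choose a b hab using h1
  choose c d hcd using h2
  set A : ℝ := ∑ t, (a t ^ 2 + b t ^ 2 + c t ^ 2 + d t ^ 2) with hA
  set K : ℝ := ∑ t, (b t * c t - a t * d t) with hK
  clear_value A K
  -- main sum formula
  have hsum : ∀ J : Quaternion ℝ, J.re = 0 → J.imI^2 + J.imJ^2 + J.imK^2 = 1 →
      ∑ t, ‖f J z t‖ ^ 2 = A + 2 * K * (I.imI*J.imI + I.imJ*J.imJ + I.imK*J.imK) := by
    intro J hJre hJn
    have hterm : ∀ t, ‖f J z t‖ ^ 2 =
        (a t ^ 2 + b t ^ 2 + c t ^ 2 + d t ^ 2)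
          + 2*(b t * c t - a t * d t)*(I.imI*J.imI + I.imJ*J.imJ + I.imK*J.imK) := by
      intro t
      have : ‖f J z t‖ ^ 2 = Quaternion.normSq (f J z t) := by
        rw [sq, ← Quaternion.normSq_eq_norm_mul_self]
      rw [this, hf, hab t, hcd t, key (a t) (b t) (c t) (d t) I J hIre hJre hIn hJn]
    rw [Finset.sum_congr rfl (fun t _ => hterm t), Finset.sum_add_distrib, ← hA,
      ← Finset.sum_mul, ← Finset.mul_sum, ← hK]
  have hnegre : (-I).re = 0 := by simp [hIre]
  have hnegn : (-I).imI^2 + (-I).imJ^2 + (-I).imK^2 = 1 := by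
    simpa using hIn
  have hvI : ∑ t, ‖f I z t‖ ^ 2 = A + 2 * K := by
    rw [hsum I hIre hIn]; linear_combination (2*K) * hIn
  have hvnI : ∑ t, ‖f (-I) z t‖ ^ 2 = A - 2 * K := by
    rw [hsum (-I) hnegre hnegn]
    simp only [Quaternion.imI_neg, Quaternion.imJ_neg, Quaternion.imK_neg]
    linear_combination (-(2*K)) * hIn
  have hnegI : (-I) ^ 2 = -1 := by rw [neg_sq]; exact hI
  -- bounds for general J
  have hbound : ∀ J : Quaternion ℝ, J ^ 2 = -1 →
      A - 2*|K| ≤ ∑ t, ‖f J z t‖ ^ 2 ∧ ∑ t, ‖f J z t‖ ^ 2 ≤ A + 2*|K| := by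
    intro J hJ
    obtain ⟨hJre, hJn⟩ := unit_im J hJ
    rw [hsum J hJre hJn]
    have he2 : (I.imI*J.imI + I.imJ*J.imJ + I.imK*J.imK) ^ 2 ≤ 1 := by
      nlinarith [sq_nonneg (I.imI*J.imJ - I.imJ*J.imI), sq_nonneg (I.imI*J.imK - I.imK*J.imI),
        sq_nonneg (I.imJ*J.imK - I.imK*J.imJ), hIn, hJn]
    set e : ℝ := I.imI*J.imI + I.imJ*J.imJ + I.imK*J.imK with he
    clear_value e
    have he3 : -1 ≤ e := by nlinarith [sq_nonneg (e + 1)]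
    have he4 : e ≤ 1 := by nlinarith [sq_nonneg (e - 1)]
    have habs := abs_nonneg K
    constructor
    · rcases le_total 0 K with hk | hk
      · rw [abs_of_nonneg hk]; nlinarith
      · rw [abs_of_nonpos hk]; nlinarith
    · rcases le_total 0 K with hk | hk
      · rw [abs_of_nonneg hk]; nlinarith
      · rw [abs_of_nonpos hk]; nlinarith
  have hmaxval : max (A + 2*K) (A - 2*K) = A + 2*|K| := by
    rcases le_total 0 K with hk | hk
    · rw [abs_of_nonneg hk, max_eq_left (by linarith)]
    · rw [abs_of_nonpos hk, max_eq_right (by linarith)]; ring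
  have hminval : min (A + 2*K) (A - 2*K) = A - 2*|K| := by
    rcases le_total 0 K with hk | hk
    · rw [abs_of_nonneg hk, min_eq_right (by linarith)]
    · rw [abs_of_nonpos hk, min_eq_left (by linarith)]; ring
  constructor
  · constructor
    · rcases max_choice (Real.sqrt (∑ t, ‖f I z t‖ ^ 2)) (Real.sqrt (∑ t, ‖f (-I) z t‖ ^ 2)) with
        h | h
      · exact ⟨I, hI, by rw [h]⟩
      · exact ⟨-I, hnegI, by rw [h]⟩
    · rintro r ⟨J, hJ, rfl⟩
      obtain ⟨_, hub⟩ := hbound J hJ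
      rcases le_total 0 K with hk | hk
      · refine le_trans (Real.sqrt_le_sqrt ?_) (le_max_left _ _)
        rw [hvI, abs_of_nonneg hk] at *; linarith
      · refine le_trans (Real.sqrt_le_sqrt ?_) (le_max_right _ _)
        rw [hvnI, abs_of_nonpos hk] at *; linarith
  · constructor
    · rcases min_choice (Real.sqrt (∑ t, ‖f I z t‖ ^ 2)) (Real.sqrt (∑ t, ‖f (-I) z t‖ ^ 2)) with
        h | h
      · exact ⟨I, hI, by rw [h]⟩
      · exact ⟨-I, hnegI, by rw [h]⟩
    · rintro r ⟨J, hJ, rfl⟩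
      obtain ⟨hlb, _⟩ := hbound J hJ
      rcases le_total 0 K with hk | hk
      · refine le_trans (min_le_right _ _) (Real.sqrt_le_sqrt ?_)
        rw [hvnI, abs_of_nonneg hk] at *; linarith
      · refine le_trans (min_le_left _ _) (Real.sqrt_le_sqrt ?_)
        rw [hvI, abs_of_nonpos hk] at *; linarith
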